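/- If a_0, ..., a_{n-1} ∈ F_{q^m} are linearly independent over F_q, then the s×n Moore matrix with entries a_j^{q^i}, 0 ≤ i < s, 0 ≤ j < n, has rank min{s, n}. -/

import Mathlib

open Polynomial

section Aux

variable {Fq F : Type*} [Field Fq] [Fintype Fq] [Field F] [Fintype F] [Algebra Fq F]

private lemma moore_smul_pow (lam : Fq) (x : F) (m : ℕ) :
    (lam • x) ^ (Fintype.card Fq) ^ m = lam • x ^ (Fintype.card Fq) ^ m := by
  rw [_root_.smul_pow, Algebra.smul_def, Algebra.smul_def, FiniteField.pow_card_pow]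

private lemma moore_add_pow (x y : F) (m : ℕ) :
    (x + y) ^ (Fintype.card Fq) ^ m
      = x ^ (Fintype.card Fq) ^ m + y ^ (Fintype.card Fq) ^ m := by
  obtain ⟨p, hp⟩ := CharP.exists Fq
  haveI : CharP Fq p := hp
  obtain ⟨k, hprime, hcard⟩ := FiniteField.card Fq p
  haveI : Fact p.Prime := ⟨hprime⟩
  haveI : CharP F p := charP_of_injective_algebraMap (algebraMap Fq F).injective p
  rw [hcard, ← pow_mul, add_pow_char_pow]

/-- Rows of the `s × n` Moore matrix are `F`-linearly independent when `s ≤ n`. -/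
private lemma moore_rows_li (s n : ℕ) (hsn : s ≤ n) (a : Fin n → F)
    (h : LinearIndependent Fq a) :
    LinearIndependent F
      (fun (i : Fin s) => fun (j : Fin n) => a j ^ (Fintype.card Fq) ^ (i : ℕ)) := by
  classical
  set q := Fintype.card Fq with hq
  have hq1 : 1 < q := Fintype.one_lt_card
  have hqpos : ∀ m : ℕ, q ^ m ≠ 0 := fun m => (pow_pos (by omega) m).ne'
  rw [Fintype.linearIndependent_iff]
  intro c hc i
  have hn0 : 0 < n := lt_of_lt_of_le i.pos hsn
  have hc' : ∀ j : Fin n, ∑ i : Fin s, c i * a j ^ q ^ (i : ℕ) = 0 := by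
    intro j
    have := congrFun hc j
    simpa using this
  set f : F[X] := ∑ i : Fin s, Polynomial.C (c i) * Polynomial.X ^ q ^ (i : ℕ) with hf
  have hevalx : ∀ y : F, f.eval y = ∑ i : Fin s, c i * y ^ q ^ (i : ℕ) := by
    intro y; simp [hf, Polynomial.eval_finset_sum]
  have heval : ∀ x ∈ Submodule.span Fq (Set.range a), f.eval x = 0 := by
    intro x hx
    induction hx using Submodule.span_induction with
    | mem x hxx =>
      obtain ⟨j, rfl⟩ := hxx
      rw [hevalx]; exact hc' j
    | zero =>
      rw [hevalx]
      refine Finset.sum_eq_zero fun i _ => ?_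
      rw [zero_pow (hqpos _), mul_zero]
    | add x y hx hy hfx hfy =>
      rw [hevalx] at hfx hfy ⊢
      have : ∀ i : Fin s, c i * (x + y) ^ q ^ (i : ℕ)
          = c i * x ^ q ^ (i : ℕ) + c i * y ^ q ^ (i : ℕ) := by
        intro i
        rw [moore_add_pow, mul_add]
      rw [Finset.sum_congr rfl fun i _ => this i, Finset.sum_add_distrib, hfx, hfy,
        add_zero]
    | smul lam x hx hfx =>
      rw [hevalx] at hfx ⊢
      have : ∀ i : Fin s, c i * (lam • x) ^ q ^ (i : ℕ)
          = lam • (c i * x ^ q ^ (i : ℕ)) := by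
        intro i
        rw [moore_smul_pow, mul_smul_comm]
      rw [Finset.sum_congr rfl fun i _ => this i, ← Finset.smul_sum, hfx, smul_zero]
  haveI : Fintype (Submodule.span Fq (Set.range a)) := Fintype.ofFinite _
  have hcardspan : Fintype.card (Submodule.span Fq (Set.range a)) = q ^ n := by
    rw [Module.card_eq_pow_finrank (K := Fq), finrank_span_eq_card h, Fintype.card_fin]
  have hdeg : f.natDegree < q ^ n := by
    have hle : f.natDegree ≤ q ^ (n - 1) := by
      refine natDegree_sum_le_of_forall_le _ _ fun i _ => ?_
      refine (natDegree_C_mul_X_pow_le _ _).trans ?_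
      exact Nat.pow_le_pow_right (by omega) (by omega)
    exact lt_of_le_of_lt hle (Nat.pow_lt_pow_right hq1 (by omega))
  have hf0 : f = 0 := by
    refine eq_zero_of_natDegree_lt_card_of_eval_eq_zero f
      (f := fun x : Submodule.span Fq (Set.range a) => (x : F))
      Subtype.val_injective (fun x => heval x x.2) ?_
    rwa [hcardspan]
  have : f.coeff (q ^ (i : ℕ)) = c i := by
    rw [hf, Polynomial.finset_sum_coeff]
    rw [Finset.sum_eq_single i]
    · simp
    · intro b _ hb
      rw [Polynomial.coeff_C_mul, Polynomial.coeff_X_pow, if_neg, mul_zero]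
      intro hqe
      exact hb (Fin.ext (Nat.pow_right_injective hq1 hqe.symm))
    · simp
  rw [hf0] at this
  simpa using this.symm

end Aux

/-- If `a_0, ..., a_{n-1} ∈ F_{q^m}` are linearly independent over `F_q`, then
the `s×n` Moore matrix with entries `a_j^{q^i}` (`0 ≤ i < s`, `0 ≤ j < n`) has rank
`min {s, n}`. -/
theorem moore_matrix_rank (Fq F : Type*) [Field Fq] [Fintype Fq]
    [Field F] [Fintype F] [Algebra Fq F] (s n : ℕ) (a : Fin n → F)
    (h : LinearIndependent Fq a) :
    (Matrix.of fun (i : Fin s) (j : Fin n) =>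
        a j ^ (Fintype.card Fq) ^ (i : ℕ)).rank = min s n := by
  classical
  set q := Fintype.card Fq with hq
  set M : Matrix (Fin s) (Fin n) F := Matrix.of fun (i : Fin s) (j : Fin n) =>
    a j ^ q ^ (i : ℕ) with hM
  rcases le_total s n with hsn | hns
  · -- rows are linearly independent
    rw [min_eq_left hsn, ← Matrix.rank_transpose, Matrix.rank_eq_finrank_span_cols,
      Matrix.col_transpose]
    have hli : LinearIndependent F (fun i : Fin s => M i) :=
      moore_rows_li s n hsn a h
    rw [finrank_span_eq_card (b := M.row) hli, Fintype.card_fin]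
  · -- columns are linearly independent
    rw [min_eq_right hns, Matrix.rank_eq_finrank_span_cols]
    set M0 : Matrix (Fin n) (Fin n) F := Matrix.of fun (i : Fin n) (j : Fin n) =>
      a j ^ q ^ (i : ℕ) with hM0
    have hrows : LinearIndependent F (fun i : Fin n => M0 i) :=
      moore_rows_li n n le_rfl a h
    have hunit : IsUnit M0 := Matrix.linearIndependent_rows_iff_isUnit.mp hrows
    have hcols0 : LinearIndependent F (fun j : Fin n => M0.transpose j) :=
      Matrix.linearIndependent_cols_iff_isUnit.mpr hunit
    have hcols : LinearIndependent F (fun j : Fin n => M.transpose j) := by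
      have hcomp :
          (fun j : Fin n => (LinearMap.funLeft F F (Fin.castLE hns)) (M.transpose j))
            = fun j : Fin n => M0.transpose j := by
        funext j
        funext i
        simp [M, M0, Matrix.transpose_apply, LinearMap.funLeft]
      refine LinearIndependent.of_comp (LinearMap.funLeft F F (Fin.castLE hns)) ?_
      show LinearIndependent F
        (fun j : Fin n => (LinearMap.funLeft F F (Fin.castLE hns)) (M.transpose j))
      rw [hcomp]
      exact hcols0
    rw [finrank_span_eq_card (b := M.col) hcols, Fintype.card_fin]
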